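/- arXiv:1804.07002 — 2 statements merged into one kernel-verified Lean document; each statement's English description precedes it below -/
import Mathlib

section
/- Let Z₁,…,Z_M be independent real random variables with E[|Z_i|] ≤ C·M^{-2} and |Z_i| ≤ C almost surely for each i. Then for any α > 0 there exists C_α depending only on C and α such that, for all sufficiently large M, P(Σ_{i=1}^M |Z_i| ≥ C_α·ln(M)) ≤ M^{-α}. -/
open MeasureTheory Real ProbabilityTheory

noncomputable section

lemma exp_le_one_add_aux (x : ℝ) (h0 : 0 ≤ x) (h1 : x ≤ 1) :
    Real.exp x ≤ 1 + Real.exp 1 * x := by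
  have h := convexOn_exp.2 (Set.mem_univ (0:ℝ)) (Set.mem_univ (1:ℝ))
    (sub_nonneg.2 h1) h0 (by ring)
  simp only [smul_eq_mul, mul_zero, mul_one, zero_add, Real.exp_zero] at h
  nlinarith [h]

/-- for independent random variables with `E[|Z_i|] ≤ C M⁻²` and `|Z_i| ≤ C`
a.s., the sum `Σ |Z_i|` exceeds `C_α ln M` with probability at most `M^{-α}`. -/
theorem sum_abs_concentration (C α : ℝ) (hC : 0 < C) (hα : 0 < α) :
    ∃ Cα > 0, ∃ M₀ : ℕ, ∀ M : ℕ, M₀ ≤ M →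
      ∀ (Ω : Type) (_ : MeasurableSpace Ω) (μ : Measure Ω),
        IsProbabilityMeasure μ →
        ∀ Z : Fin M → Ω → ℝ,
          (∀ i, Measurable (Z i)) →
          iIndepFun Z μ →
          (∀ i, ∫ ω, |Z i ω| ∂μ ≤ C * (M : ℝ) ^ (-2 : ℤ)) →
          (∀ i, ∀ᵐ ω ∂μ, |Z i ω| ≤ C) →
          μ {ω | Cα * Real.log M ≤ ∑ i, |Z i ω|} ≤ ENNReal.ofReal ((M : ℝ) ^ (-α)) := by
  refine ⟨C * (α + 1), by positivity, 3, fun M hM Ω _ μ hμ Z hZmeas hindep hint hbd => ?_⟩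
  have hM3 : (3:ℝ) ≤ M := by exact_mod_cast hM
  have hM0 : (0:ℝ) < M := by linarith
  have he3 : Real.exp 1 ≤ 3 := by
    have := Real.exp_one_lt_d9; linarith
  set Y : Fin M → Ω → ℝ := fun i ω => |Z i ω| with hY
  have hYmeas : ∀ i, Measurable (Y i) := fun i => (hZmeas i).abs
  have hYindep : iIndepFun Y μ :=
    hindep.comp (fun _ => (abs : ℝ → ℝ)) (fun _ => measurable_abs)
  set t : ℝ := 1 / C with ht
  have htpos : 0 < t := by positivity
  have htC : t * C = 1 := by rw [ht, one_div, inv_mul_cancel₀ hC.ne']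
  have hYnn : ∀ i ω, 0 ≤ Y i ω := fun i ω => abs_nonneg _
  have hY_int : ∀ i, Integrable (Y i) μ := by
    intro i
    refine Integrable.mono' (integrable_const C) (hYmeas i).aestronglyMeasurable ?_
    filter_upwards [hbd i] with ω hω
    rwa [Real.norm_eq_abs, abs_of_nonneg (hYnn i ω)]
  have hexp_int : ∀ i, Integrable (fun ω => Real.exp (t * Y i ω)) μ := by
    intro i
    refine Integrable.mono' (integrable_const (Real.exp 1))
      (((hYmeas i).const_mul t).exp.aestronglyMeasurable) ?_
    filter_upwards [hbd i] with ω hω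
    rw [Real.norm_eq_abs, Real.abs_exp]
    apply Real.exp_le_exp.2
    calc t * Y i ω ≤ t * C := by gcongr
      _ = 1 := htC
  have hmgf : ∀ i, mgf (Y i) μ t ≤ Real.exp (Real.exp 1 * (M:ℝ) ^ (-2:ℤ)) := by
    intro i
    have h1 : mgf (Y i) μ t ≤ ∫ ω, (1 + Real.exp 1 * (t * Y i ω)) ∂μ := by
      refine integral_mono_ae (hexp_int i)
        ((integrable_const 1).add (((hY_int i).const_mul t).const_mul (Real.exp 1))) ?_
      filter_upwards [hbd i] with ω hω
      refine exp_le_one_add_aux _ (by positivity) ?_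
      calc t * Y i ω ≤ t * C := by gcongr
        _ = 1 := htC
    have h2 : ∫ ω, (1 + Real.exp 1 * (t * Y i ω)) ∂μ
        = 1 + Real.exp 1 * (t * ∫ ω, Y i ω ∂μ) := by
      rw [integral_add (integrable_const 1)
        (((hY_int i).const_mul t).const_mul (Real.exp 1)),
        integral_const, probReal_univ, one_smul,
        integral_const_mul, integral_const_mul]
    have h3 : Real.exp 1 * (t * ∫ ω, Y i ω ∂μ) ≤ Real.exp 1 * (M:ℝ) ^ (-2:ℤ) := by
      have := hint i
      calc Real.exp 1 * (t * ∫ ω, Y i ω ∂μ)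
          ≤ Real.exp 1 * (t * (C * (M:ℝ) ^ (-2:ℤ))) :=
            mul_le_mul_of_nonneg_left (mul_le_mul_of_nonneg_left this htpos.le)
              (Real.exp_pos 1).le
        _ = Real.exp 1 * (M:ℝ) ^ (-2:ℤ) := by
            rw [← mul_assoc t C, htC, one_mul]
    calc mgf (Y i) μ t ≤ 1 + Real.exp 1 * (t * ∫ ω, Y i ω ∂μ) := h1.trans_eq h2
      _ ≤ 1 + Real.exp 1 * (M:ℝ) ^ (-2:ℤ) := by linarith
      _ ≤ Real.exp (Real.exp 1 * (M:ℝ) ^ (-2:ℤ)) := by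
          have := Real.add_one_le_exp (Real.exp 1 * (M:ℝ) ^ (-2:ℤ)); linarith
  set S : Ω → ℝ := fun ω => ∑ i, Y i ω with hS
  have hS_int : Integrable (fun ω => Real.exp (t * S ω)) μ := by
    refine Integrable.mono' (integrable_const (Real.exp (t * (M * C))))
      ((Finset.measurable_sum _ (fun i _ => hYmeas i)).const_mul t).exp.aestronglyMeasurable ?_
    have hae : ∀ᵐ ω ∂μ, ∀ i, Y i ω ≤ C := (ae_all_iff).2 hbd
    filter_upwards [hae] with ω hω
    rw [Real.norm_eq_abs, Real.abs_exp]
    apply Real.exp_le_exp.2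
    have : S ω ≤ M * C := by
      calc S ω ≤ ∑ _i : Fin M, C := Finset.sum_le_sum (fun i _ => hω i)
        _ = M * C := by simp [Finset.sum_const, Finset.card_univ, nsmul_eq_mul]
    calc t * S ω ≤ t * (M * C) := by gcongr
      _ = t * (M * C) := rfl
  have hmgfS : mgf S μ t = ∏ i, mgf (Y i) μ t := by
    rw [← hYindep.mgf_sum hYmeas Finset.univ]
    congr 1
    funext ω
    simp [hS, Finset.sum_apply]
  have hmgfS_le : mgf S μ t ≤ Real.exp 1 := by
    rw [hmgfS]
    calc ∏ i, mgf (Y i) μ t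
        ≤ ∏ _i : Fin M, Real.exp (Real.exp 1 * (M:ℝ) ^ (-2:ℤ)) :=
          Finset.prod_le_prod (fun i _ => mgf_nonneg) (fun i _ => hmgf i)
      _ = Real.exp (M * (Real.exp 1 * (M:ℝ) ^ (-2:ℤ))) := by
          rw [Finset.prod_const, Finset.card_univ, Fintype.card_fin, ← Real.exp_nat_mul]
      _ ≤ Real.exp 1 := by
          apply Real.exp_le_exp.2
          have h9 : (M:ℝ) * (Real.exp 1 * (M:ℝ) ^ (-2:ℤ)) = Real.exp 1 / M := by
            field_simp
          rw [h9, div_le_one hM0]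
          linarith
  have hcher := measure_ge_le_exp_mul_mgf (μ := μ) (X := S)
    (C * (α + 1) * Real.log M) htpos.le hS_int
  have hlog : 0 < Real.log M := Real.log_pos (by linarith)
  have hexp_eq : Real.exp (-t * (C * (α + 1) * Real.log M)) = (M:ℝ) ^ (-(α+1)) := by
    rw [Real.rpow_def_of_pos hM0]
    congr 1
    have : -t * (C * (α + 1) * Real.log M) = -((t * C) * ((α+1) * Real.log M)) := by ring
    rw [this, htC, one_mul]
    ring
  have hfinal : (μ {ω | C * (α + 1) * Real.log M ≤ S ω}).toReal ≤ (M:ℝ) ^ (-α) := by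
    calc (μ {ω | C * (α + 1) * Real.log M ≤ S ω}).toReal
        ≤ Real.exp (-t * (C * (α + 1) * Real.log M)) * mgf S μ t := hcher
      _ ≤ (M:ℝ) ^ (-(α+1)) * Real.exp 1 := by
          rw [hexp_eq]; gcongr
      _ ≤ (M:ℝ) ^ (-α) := by
          have h1 : (M:ℝ) ^ (-(α+1)) = (M:ℝ) ^ (-α) * (M:ℝ)⁻¹ := by
            rw [← Real.rpow_neg_one (M:ℝ), ← Real.rpow_add hM0]
            congr 1; ring
          rw [h1, mul_assoc]
          have h2 : (M:ℝ)⁻¹ * Real.exp 1 ≤ 1 := by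
            rw [inv_mul_le_iff₀ hM0]; linarith
          calc (M:ℝ) ^ (-α) * ((M:ℝ)⁻¹ * Real.exp 1)
              ≤ (M:ℝ) ^ (-α) * 1 := by gcongr
            _ = (M:ℝ) ^ (-α) := mul_one _
  rw [ENNReal.le_ofReal_iff_toReal_le (measure_ne_top μ _) (Real.rpow_nonneg hM0.le _)]
  exact hfinal
end
end

section
/- Generalized conditional Gronwall lemma: Let T > 0, let e : [0,T] → [0,∞) be continuous with e(0) = 0, and let 0 < λ₂ < λ₃ and C > 0 be constants independent of N. Suppose that for every 0 < T₁ ≤ T, the condition max_{t∈[0,T₁]} e(t) ≤ N^{-λ₂} implies the differential inequality de(t)/dt ≤ C√(log N)·e(t) + C·log²(N)·N^{-λ₃} for 0 < t ≤ T₁. Then there exists N₀ ∈ ℕ depending only on C, T, λ₂, λ₃ such that for all N ≥ N₀, max_{t∈[0,T]} e(t) ≤ N^{-λ₂}. -/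
open Real Set Filter Topology

noncomputable section

/-- Auxiliary Gronwall estimate: from a derivative bound on `Ioc 0 T₁` with `e 0 = 0`. -/
lemma gronwall_aux {e : ℝ → ℝ} {T₁ K ε : ℝ} (hK : 0 < K) (hε : 0 ≤ ε) (hT : 0 < T₁)
    (hc : ContinuousOn e (Icc 0 T₁)) (he0 : e 0 = 0)
    (hnn : ∀ t ∈ Icc (0:ℝ) T₁, 0 ≤ e t)
    (hd : ∀ t ∈ Ioc (0:ℝ) T₁, DifferentiableAt ℝ e t)
    (hb : ∀ t ∈ Ioc (0:ℝ) T₁, deriv e t ≤ K * e t + ε) :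
    ∀ t ∈ Icc (0:ℝ) T₁, e t ≤ ε / K * Real.exp (K * T₁) := by
  intro t ht
  have hεK : 0 ≤ ε / K := div_nonneg hε hK.le
  have hexp : (0:ℝ) < Real.exp (K * T₁) := Real.exp_pos _
  rcases eq_or_lt_of_le ht.1 with h0 | h0
  · rw [← h0, he0]; positivity
  -- now 0 < t
  have key : ∀ a ∈ Ioo (0:ℝ) t, e t - ε / K * Real.exp (K * T₁) ≤ e a * Real.exp (K * T₁) := by
    intro a ha
    have hat : a < t := ha.2
    have ha0 : 0 < a := ha.1
    have hsub : Icc a t ⊆ Icc 0 T₁ := Icc_subset_Icc ha0.le ht.2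
    have hsub2 : Ico a t ⊆ Ioc 0 T₁ := fun x hx => ⟨ha0.trans_le hx.1, hx.2.le.trans ht.2⟩
    have hg := le_gronwallBound_of_liminf_deriv_right_le (f := e) (f' := deriv e)
      (a := a) (b := t) (δ := e a) (K := K) (ε := ε)
      (hc.mono hsub)
      (by
        intro x hx r hr
        have hder : HasDerivAt e (deriv e x) x := (hd x (hsub2 hx)).hasDerivAt
        have hts : Tendsto (slope e x) (𝓝[>] x) (𝓝 (deriv e x)) :=
          (hasDerivAt_iff_tendsto_slope.1 hder).mono_left
            (nhdsWithin_mono x fun z hz => ne_of_gt hz)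
        have hev : ∀ᶠ z in 𝓝[>] x, slope e x z < r := hts.eventually_lt_const hr
        refine (hev.mono ?_).frequently
        intro z hz
        simpa [slope_def_field, div_eq_inv_mul] using hz)
      le_rfl
      (fun x hx => hb x (hsub2 hx)) t (right_mem_Icc.2 hat.le)
    have hKne : K ≠ 0 := hK.ne'
    rw [gronwallBound_of_K_ne_0 hKne] at hg
    have h1 : Real.exp (K * (t - a)) ≤ Real.exp (K * T₁) := by
      apply Real.exp_le_exp.2
      have : t - a ≤ T₁ := by linarith [ht.2]
      nlinarith
    have hea : 0 ≤ e a := hnn a ⟨ha0.le, hat.le.trans ht.2⟩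
    have h2 : ε / K * (Real.exp (K * (t - a)) - 1) ≤ ε / K * Real.exp (K * T₁) := by
      apply mul_le_mul_of_nonneg_left _ hεK
      linarith
    nlinarith [mul_le_mul_of_nonneg_left h1 hea]
  -- take the limit a → 0⁺
  have hne : (𝓝[Ioo (0:ℝ) t] 0).NeBot := left_nhdsWithin_Ioo_neBot h0
  have htd : Tendsto (fun a => e a * Real.exp (K * T₁)) (𝓝[Ioo (0:ℝ) t] 0) (𝓝 0) := by
    have : Tendsto e (𝓝[Ioo (0:ℝ) t] 0) (𝓝 (e 0)) :=
      (hc.continuousWithinAt ⟨le_rfl, hT.le⟩).mono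
        (fun z hz => ⟨hz.1.le, hz.2.le.trans ht.2⟩)
    rw [he0] at this
    simpa using this.mul_const (Real.exp (K * T₁))
  have := ge_of_tendsto htd (eventually_mem_nhdsWithin.mono key)
  linarith

/-- Asymptotic smallness: the sub-polynomial factor is eventually dominated. -/
lemma asymp_aux (C T lam2 lam3 : ℝ) (hC : 0 < C) (hT : 0 < T) (hlam : lam2 < lam3) :
    ∀ᶠ x : ℝ in atTop, x ^ 2 * Real.exp (C * T * Real.sqrt x) * Real.exp (-(lam3 - lam2) * x)
        ≤ 1 / 2 := by
  set δ := lam3 - lam2 with hδdef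
  have hδ : 0 < δ := by simp [hδdef]; linarith
  set A := (C * T) ^ 2 / (2 * δ) with hA
  have hCT : 0 < C * T := mul_pos hC hT
  have hbound : ∀ x : ℝ, 0 ≤ x → x ^ 2 * Real.exp (C * T * Real.sqrt x) * Real.exp (-δ * x)
      ≤ Real.exp A * (x ^ 2 * Real.exp (-(δ/2) * x)) := by
    intro x hx
    have hs : C * T * Real.sqrt x ≤ δ / 2 * x + A := by
      have hrw : δ / 2 * x + A = (δ ^ 2 * x + (C * T) ^ 2) / (2 * δ) := by
        rw [hA]; field_simp
      rw [hrw, le_div_iff₀ (by positivity : (0:ℝ) < 2 * δ)]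
      nlinarith [sq_nonneg (δ * Real.sqrt x - C * T), Real.sq_sqrt hx, Real.sqrt_nonneg x]
    have : Real.exp (C * T * Real.sqrt x) ≤ Real.exp (δ / 2 * x + A) := Real.exp_le_exp.2 hs
    calc x ^ 2 * Real.exp (C * T * Real.sqrt x) * Real.exp (-δ * x)
        ≤ x ^ 2 * Real.exp (δ / 2 * x + A) * Real.exp (-δ * x) := by
          have := mul_le_mul_of_nonneg_left this (by positivity : (0:ℝ) ≤ x ^ 2)
          exact mul_le_mul_of_nonneg_right this (Real.exp_pos _).le
      _ = Real.exp A * (x ^ 2 * Real.exp (-(δ/2) * x)) := by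
          rw [mul_assoc, ← Real.exp_add,
            show δ / 2 * x + A + -δ * x = A + -(δ / 2) * x by ring, Real.exp_add]; ring
  have hlim : Tendsto (fun x : ℝ => Real.exp A * (x ^ 2 * Real.exp (-(δ/2) * x))) atTop (𝓝 0) := by
    have h := tendsto_rpow_mul_exp_neg_mul_atTop_nhds_zero 2 (δ/2) (by positivity)
    have h2 : Tendsto (fun x : ℝ => x ^ 2 * Real.exp (-(δ/2) * x)) atTop (𝓝 0) := by
      refine h.congr' ?_
      filter_upwards [eventually_ge_atTop (0:ℝ)] with x hx
      rw [show ((2:ℝ)) = ((2:ℕ):ℝ) by norm_num, Real.rpow_natCast]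
    simpa using h2.const_mul (Real.exp A)
  have hev : ∀ᶠ x : ℝ in atTop, Real.exp A * (x ^ 2 * Real.exp (-(δ/2) * x)) ≤ 1 / 2 := by
    have := hlim.eventually (eventually_le_nhds (by norm_num : (0:ℝ) < 1/2))
    exact this.mono fun x hx => hx
  filter_upwards [hev, eventually_ge_atTop (0:ℝ)] with x hx hx0
  exact (hbound x hx0).trans hx

/-- generalized conditional Gronwall lemma. -/
theorem conditional_gronwall (C T lam2 lam3 : ℝ)
    (hC : 0 < C) (hT : 0 < T) (hlam2 : 0 < lam2) (hlam : lam2 < lam3) :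
    ∃ N₀ : ℕ, ∀ N : ℕ, N₀ ≤ N →
      ∀ e : ℝ → ℝ,
        ContinuousOn e (Icc 0 T) →
        e 0 = 0 →
        (∀ t ∈ Icc (0 : ℝ) T, 0 ≤ e t) →
        (∀ t ∈ Ioc (0 : ℝ) T, DifferentiableAt ℝ e t) →
        (∀ T₁, 0 < T₁ → T₁ ≤ T →
          (∀ t ∈ Icc (0 : ℝ) T₁, e t ≤ (N : ℝ) ^ (-lam2)) →
          (∀ t ∈ Ioc (0 : ℝ) T₁,
            deriv e t ≤ C * Real.sqrt (Real.log N) * e t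
              + C * (Real.log N) ^ 2 * (N : ℝ) ^ (-lam3))) →
        ∀ t ∈ Icc (0 : ℝ) T, e t ≤ (N : ℝ) ^ (-lam2) := by
  -- choose N₀ from the asymptotic lemma
  have hasymp := asymp_aux C T lam2 lam3 hC hT hlam
  have hlog : Tendsto (fun N : ℕ => Real.log N) atTop atTop :=
    Real.tendsto_log_atTop.comp tendsto_natCast_atTop_atTop
  have hev : ∀ᶠ N : ℕ in atTop,
      (Real.log N) ^ 2 * Real.exp (C * T * Real.sqrt (Real.log N)) *
        Real.exp (-(lam3 - lam2) * Real.log N) ≤ 1 / 2 ∧ 1 ≤ Real.log N := by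
    filter_upwards [hlog.eventually hasymp, hlog.eventually (eventually_ge_atTop (1:ℝ))]
      with N h1 h2
    exact ⟨h1, h2⟩
  rcases eventually_atTop.1 hev with ⟨N₀, hN₀⟩
  refine ⟨max N₀ 1, fun N hN e hc he0 hnn hd hyp t ht => ?_⟩
  obtain ⟨hsmall, hlog1⟩ := hN₀ N (le_trans (le_max_left _ _) hN)
  have hN1 : 1 ≤ N := le_trans (le_max_right _ _) hN
  have hNpos : (0:ℝ) < N := by exact_mod_cast Nat.lt_of_lt_of_le Nat.zero_lt_one hN1
  set x := Real.log N with hx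
  have hx0 : 0 < x := lt_of_lt_of_le one_pos hlog1
  set M := (N:ℝ) ^ (-lam2) with hM
  have hMpos : 0 < M := Real.rpow_pos_of_pos hNpos _
  set K := C * Real.sqrt x with hK
  have hsx : 0 < Real.sqrt x := Real.sqrt_pos.2 hx0
  have hsx1 : 1 ≤ Real.sqrt x := by
    rw [show (1:ℝ) = Real.sqrt 1 by simp]; exact Real.sqrt_le_sqrt hlog1
  have hKpos : 0 < K := mul_pos hC hsx
  set ε := C * x ^ 2 * (N:ℝ) ^ (-lam3) with hε
  have hεpos : 0 < ε := by
    have := Real.rpow_pos_of_pos hNpos (-lam3); positivity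
  -- the key smallness estimate
  have hrpow : ∀ y : ℝ, (N:ℝ) ^ y = Real.exp (y * x) := fun y => by
    rw [Real.rpow_def_of_pos hNpos, mul_comm, ← hx]
  have hkey : ε / K * Real.exp (K * T) ≤ M / 2 := by
    have h1 : ε / K = x ^ 2 * (N:ℝ) ^ (-lam3) / Real.sqrt x := by
      rw [hε, hK]; field_simp
    have h2 : ε / K ≤ x ^ 2 * (N:ℝ) ^ (-lam3) := by
      rw [h1]
      have hnum : 0 ≤ x ^ 2 * (N:ℝ) ^ (-lam3) := by positivity
      exact div_le_self hnum hsx1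
    have h3 : ε / K * Real.exp (K * T) ≤ x ^ 2 * (N:ℝ) ^ (-lam3) * Real.exp (K * T) :=
      mul_le_mul_of_nonneg_right h2 (Real.exp_pos _).le
    refine h3.trans ?_
    have hsplit : (N:ℝ) ^ (-lam3) = Real.exp (-(lam3 - lam2) * x) * M := by
      rw [hM, hrpow, hrpow, ← Real.exp_add]; ring_nf
    have hKT : K * T = C * T * Real.sqrt x := by rw [hK]; ring
    calc x ^ 2 * (N:ℝ) ^ (-lam3) * Real.exp (K * T)
        = (x ^ 2 * Real.exp (C * T * Real.sqrt x) * Real.exp (-(lam3 - lam2) * x)) * M := by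
          rw [hsplit, hKT]; ring
      _ ≤ (1 / 2) * M := mul_le_mul_of_nonneg_right hsmall hMpos.le
      _ = M / 2 := by ring
  -- bootstrap / contradiction argument
  by_contra hcon
  have hlt : M < e t := lt_of_not_ge hcon
  set B := Icc (0:ℝ) T ∩ e ⁻¹' (Ici M) with hB
  have hBclosed : IsClosed B := hc.preimage_isClosed_of_isClosed isClosed_Icc isClosed_Ici
  have hBne : B.Nonempty := ⟨t, ht, hlt.le⟩
  have hBbdd : BddBelow B := ⟨0, fun s hs => hs.1.1⟩
  set u := sInf B with hu
  have huB : u ∈ B := hBclosed.csInf_mem hBne hBbdd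
  have huI : u ∈ Icc (0:ℝ) T := huB.1
  have hMeu : M ≤ e u := huB.2
  have hu0 : 0 < u := by
    rcases lt_or_eq_of_le huI.1 with h | h
    · exact h
    · exfalso; rw [← h] at hMeu; rw [he0] at hMeu; linarith
  have hltu : ∀ s ∈ Ico (0:ℝ) u, e s < M := by
    intro s hs
    by_contra hsc
    have : s ∈ B := ⟨⟨hs.1, hs.2.le.trans huI.2⟩, le_of_not_gt hsc⟩
    exact absurd (csInf_le hBbdd this) (not_le.2 hs.2)
  have hmax : ∀ s ∈ Icc (0:ℝ) u, e s ≤ M := by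
    intro s hs
    rcases lt_or_eq_of_le hs.2 with h | h
    · exact (hltu s ⟨hs.1, h⟩).le
    · -- s = u : use continuity from the left
      rw [h]
      have hne : (𝓝[Ioo (0:ℝ) u] u).NeBot := right_nhdsWithin_Ioo_neBot hu0
      have htd : Tendsto e (𝓝[Ioo (0:ℝ) u] u) (𝓝 (e u)) :=
        (hc.continuousWithinAt huI).mono
          (fun z hz => ⟨hz.1.le, hz.2.le.trans huI.2⟩)
      have hmem : ∀ᶠ z in 𝓝[Ioo (0:ℝ) u] u, z ∈ Ioo (0:ℝ) u := eventually_mem_nhdsWithin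
      refine le_of_tendsto htd (hmem.mono ?_)
      intro z hz
      exact (hltu z ⟨hz.1.le, hz.2⟩).le
  -- apply Gronwall on [0, u]
  have hderiv := hyp u hu0 huI.2 hmax
  have hgron := gronwall_aux hKpos hεpos.le hu0
    (hc.mono (Icc_subset_Icc le_rfl huI.2)) he0
    (fun s hs => hnn s ⟨hs.1, hs.2.trans huI.2⟩)
    (fun s hs => hd s ⟨hs.1, hs.2.trans huI.2⟩)
    (fun s hs => by
      have := hderiv s hs
      rw [hK, hε]
      calc deriv e s ≤ C * Real.sqrt (Real.log N) * e s + C * (Real.log N) ^ 2 * (N:ℝ) ^ (-lam3) :=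
            this
        _ = C * Real.sqrt x * e s + C * x ^ 2 * (N:ℝ) ^ (-lam3) := by rw [hx]
        )
  have h1 : e u ≤ ε / K * Real.exp (K * u) := hgron u (right_mem_Icc.2 hu0.le)
  have h2 : Real.exp (K * u) ≤ Real.exp (K * T) :=
    Real.exp_le_exp.2 (mul_le_mul_of_nonneg_left huI.2 hKpos.le)
  have h3 : e u ≤ M / 2 := by
    calc e u ≤ ε / K * Real.exp (K * u) := h1
      _ ≤ ε / K * Real.exp (K * T) :=
          mul_le_mul_of_nonneg_left h2 (div_nonneg hεpos.le hKpos.le)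
      _ ≤ M / 2 := hkey
  linarith
end
end
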